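/- If a real symmetric matrix A ∈ M_q(ℝ) with q ≥ 2 is of strict negative type, then the Hadamard exponential e^{∘(−A)} = [e^{−A_{μν}}]_{μ,ν=1}^q is positive definite. -/

import Mathlib

open Matrix Nat

private lemma aux_ite_sum {q : ℕ} (i0 : Fin q) (f : Fin q → Fin q → ℝ) :
    ∑ x : Fin q, ∑ y : Fin q, (if x = i0 then f x y else 0) = ∑ y, f i0 y := by
  rw [Finset.sum_comm]; simp

private lemma sum2_congr {q : ℕ} (f g : Fin q → Fin q → ℝ) (h : ∀ μ ν, f μ ν = g μ ν) :
    ∑ μ, ∑ ν, f μ ν = ∑ μ, ∑ ν, g μ ν :=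
  Finset.sum_congr rfl fun μ _ => Finset.sum_congr rfl fun ν _ => h μ ν

private lemma quad_eq {q : ℕ} (M : Fin q → Fin q → ℝ) (x : Fin q → ℝ) :
    x ⬝ᵥ (Matrix.of M).mulVec x = ∑ μ, ∑ ν, x μ * x ν * M μ ν := by
  simp only [dotProduct, mulVec, of_apply, Finset.mul_sum]
  exact sum2_congr _ _ (fun μ ν => by ring)

private lemma neg_type_key {q : ℕ} (A : Matrix (Fin q) (Fin q) ℝ) (i0 : Fin q) (c : Fin q → ℝ) :
    ∑ μ, ∑ ν, c μ * c ν * (A μ i0 + A i0 ν - A μ ν - A i0 i0)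
      = -((fun ν => c ν - (∑ μ, c μ) * (if ν = i0 then 1 else 0)) ⬝ᵥ
          A.mulVec (fun ν => c ν - (∑ μ, c μ) * (if ν = i0 then 1 else 0))) := by
  simp only [dotProduct, mulVec]
  simp only [mul_sub, sub_mul, mul_add, add_mul, mul_ite, ite_mul, mul_one, one_mul, mul_zero,
    zero_mul, Finset.sum_sub_distrib, Finset.sum_add_distrib, Finset.sum_ite_eq',
    Finset.mem_univ, if_true, Finset.mul_sum, Finset.sum_mul, aux_ite_sum]
  rw [Finset.sum_comm (f := fun y i => c i * (A i0 y * c y)),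
      Finset.sum_comm (f := fun y i => c i * (A i0 i0 * c y)),
      sum2_congr (fun x y => c x * (A i0 y * c y)) (fun x y => c x * c y * A i0 y) (fun _ _ => by ring),
      sum2_congr (fun x y => c x * (A x y * c y)) (fun x y => c x * c y * A x y) (fun _ _ => by ring),
      sum2_congr (fun x y => c x * (A x i0 * c y)) (fun x y => c x * c y * A x i0) (fun _ _ => by ring),
      sum2_congr (fun x y => c x * (A i0 i0 * c y)) (fun x y => c x * c y * A i0 i0) (fun _ _ => by ring)]
  ring

/-- for a real symmetric matrix `A` (with `q ≥ 2`) of strict negative type,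
the Hadamard exponential `e^{∘(−A)}` is positive definite. -/
theorem hadamard_exp_of_strict_negative_type {q : ℕ} (hq : 2 ≤ q)
    (A : Matrix (Fin q) (Fin q) ℝ) (hsym : A.IsSymm)
    (hneg : ∀ c : Fin q → ℝ, c ≠ 0 → ∑ μ, c μ = 0 → c ⬝ᵥ A.mulVec c < 0) :
    (Matrix.of fun μ ν : Fin q => Real.exp (-(A μ ν))).PosDef := by
  have hq0 : 0 < q := by omega
  set i0 : Fin q := ⟨0, hq0⟩ with hi0
  set B : Fin q → Fin q → ℝ := fun μ ν => A μ i0 + A i0 ν - A μ ν - A i0 i0 with hBdef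
  set d : (Fin q → ℝ) → (Fin q → ℝ) :=
    fun c ν => c ν - (∑ μ, c μ) * (if ν = i0 then 1 else 0) with hddef
  have key : ∀ c : Fin q → ℝ, ∑ μ, ∑ ν, c μ * c ν * B μ ν = -(d c ⬝ᵥ A.mulVec (d c)) :=
    fun c => neg_type_key A i0 c
  have hsum_d : ∀ c : Fin q → ℝ, ∑ ν, d c ν = 0 := by
    intro c
    simp [hddef, Finset.sum_sub_distrib, Finset.mul_sum, mul_ite, Finset.sum_ite_eq']
  have hBnn : ∀ c : Fin q → ℝ, 0 ≤ ∑ μ, ∑ ν, c μ * c ν * B μ ν := by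
    intro c
    rw [key]
    by_cases hd : d c = 0
    · simp [hd]
    · have := hneg (d c) hd (hsum_d c); linarith
  have hBstrict : ∀ c : Fin q → ℝ, c ≠ 0 → ∑ μ, c μ = 0 →
      0 < ∑ μ, ∑ ν, c μ * c ν * B μ ν := by
    intro c hc hc0
    rw [key]
    have hdc : d c = c := by funext ν; simp [hddef, hc0]
    rw [hdc]
    have := hneg c hc hc0; linarith
  -- B as a matrix is positive semidefinite
  have hBsymm : ∀ μ ν, B μ ν = B ν μ := by
    intro μ ν
    simp only [hBdef]
    rw [hsym.apply ν i0, hsym.apply i0 μ, hsym.apply ν μ]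
    ring
  have hBpsd : (Matrix.of B).PosSemidef := by
    refine Matrix.PosSemidef.of_dotProduct_mulVec_nonneg (Matrix.ext fun μ ν => ?_) fun x => ?_
    · simp only [conjTranspose_apply, of_apply, star_trivial]
      exact hBsymm ν μ
    · rw [star_trivial, quad_eq]
      exact hBnn x
  obtain ⟨m, v, hv⟩ := Matrix.posSemidef_iff_eq_sum_vecMulVec.mp hBpsd
  obtain ⟨C, hC⟩ : ∃ C : Matrix (Fin m) (Fin q) ℝ, Matrix.of B = Cᴴ * C :=
    ⟨Matrix.of fun i μ => v i μ, by
      rw [hv]; ext μ ν; simp [vecMulVec_apply, mul_apply, Matrix.sum_apply]⟩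
  have hBentry : ∀ μ ν, B μ ν = ∑ i, C i μ * C i ν := by
    intro μ ν
    have h := Matrix.ext_iff.mpr hC μ ν
    simpa [Matrix.mul_apply, Matrix.conjTranspose_apply, star_trivial] using h
  -- Hadamard powers of B have nonnegative quadratic form
  have hpow : ∀ (k : ℕ) (x : Fin q → ℝ), 0 ≤ ∑ μ, ∑ ν, x μ * x ν * B μ ν ^ k := by
    intro k
    induction k with
    | zero =>
      intro x
      have : ∑ μ, ∑ ν, x μ * x ν * B μ ν ^ 0 = (∑ μ, x μ) * (∑ ν, x ν) := by
        rw [Finset.sum_mul_sum]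
        exact sum2_congr _ _ fun μ ν => by ring
      rw [this, ← sq]
      positivity
    | succ k ih =>
      intro x
      have step : ∀ μ ν, x μ * x ν * B μ ν ^ (k + 1)
          = ∑ i, (x μ * C i μ) * (x ν * C i ν) * B μ ν ^ k := by
        intro μ ν
        calc x μ * x ν * B μ ν ^ (k + 1)
            = (∑ i, C i μ * C i ν) * (x μ * x ν * B μ ν ^ k) := by
              rw [← hBentry μ ν, pow_succ]; ring
          _ = ∑ i, (x μ * C i μ) * (x ν * C i ν) * B μ ν ^ k := by
              rw [Finset.sum_mul]
              exact Finset.sum_congr rfl fun i _ => by ring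
      calc (0:ℝ) ≤ ∑ i, ∑ μ, ∑ ν, (x μ * C i μ) * (x ν * C i ν) * B μ ν ^ k :=
            Finset.sum_nonneg fun i _ => ih (fun μ => x μ * C i μ)
        _ = ∑ μ, ∑ i, ∑ ν, (x μ * C i μ) * (x ν * C i ν) * B μ ν ^ k := Finset.sum_comm
        _ = ∑ μ, ∑ ν, ∑ i, (x μ * C i μ) * (x ν * C i ν) * B μ ν ^ k :=
            Finset.sum_congr rfl fun μ _ => Finset.sum_comm
        _ = ∑ μ, ∑ ν, x μ * x ν * B μ ν ^ (k + 1) := (sum2_congr _ _ step).symm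
  -- the scaling factors
  set g : Fin q → ℝ := fun μ => Real.exp (A i0 i0 / 2 - A μ i0) with hgdef
  have hrep : ∀ μ ν, Real.exp (-(A μ ν)) = (g μ * g ν) * Real.exp (B μ ν) := by
    intro μ ν
    simp only [hgdef, hBdef]
    rw [← Real.exp_add, ← Real.exp_add]
    congr 1
    rw [hsym.apply ν i0]
    ring
  refine Matrix.PosDef.of_dotProduct_mulVec_pos ?_ ?_
  · refine Matrix.ext fun μ ν => ?_
    simp only [conjTranspose_apply, of_apply, star_trivial]
    rw [hsym.apply ν μ]
  · intro x hx
    rw [star_trivial, quad_eq]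
    set y : Fin q → ℝ := fun μ => g μ * x μ with hydef
    have hy : y ≠ 0 := by
      intro h
      apply hx
      funext μ
      have : y μ = 0 := by rw [h]; rfl
      have hg : g μ ≠ 0 := Real.exp_ne_zero _
      simpa [hydef, hg] using this
    have hQ : ∑ μ, ∑ ν, x μ * x ν * Real.exp (-(A μ ν))
        = ∑ μ, ∑ ν, y μ * y ν * Real.exp (B μ ν) :=
      sum2_congr _ _ fun μ ν => by rw [hrep μ ν]; simp only [hydef]; ring
    rw [hQ]
    have hexp : ∀ t : ℝ, Real.exp t = ∑' k : ℕ, t ^ k / k ! := by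
      intro t
      rw [Real.exp_eq_exp_ℝ, NormedSpace.exp_eq_tsum_div]
    set F : ℕ → ℝ := fun k => ∑ p : Fin q × Fin q, y p.1 * y p.2 * B p.1 p.2 ^ k / k ! with hFdef
    have hsummand : ∀ p : Fin q × Fin q,
        Summable (fun k : ℕ => y p.1 * y p.2 * B p.1 p.2 ^ k / k !) := by
      intro p
      have := (Real.summable_pow_div_factorial (B p.1 p.2)).mul_left (y p.1 * y p.2)
      simpa [mul_div_assoc] using this
    have hF : Summable F := by
      apply summable_sum
      intro p _
      exact hsummand p
    have hQF : ∑ μ, ∑ ν, y μ * y ν * Real.exp (B μ ν) = ∑' k, F k := by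
      have h1 : ∑ μ, ∑ ν, y μ * y ν * Real.exp (B μ ν)
          = ∑ p : Fin q × Fin q, y p.1 * y p.2 * Real.exp (B p.1 p.2) := by
        simp [Fintype.sum_prod_type]
      rw [h1]
      calc ∑ p : Fin q × Fin q, y p.1 * y p.2 * Real.exp (B p.1 p.2)
          = ∑ p : Fin q × Fin q, ∑' k : ℕ, y p.1 * y p.2 * B p.1 p.2 ^ k / k ! := by
            refine Finset.sum_congr rfl fun p _ => ?_
            rw [hexp, ← tsum_mul_left]
            exact tsum_congr fun k => by ring
        _ = ∑' k, F k := (Summable.tsum_finsetSum fun p _ => hsummand p).symm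
    rw [hQF]
    have hFnn : ∀ k, 0 ≤ F k := by
      intro k
      have h1 : F k = (∑ μ, ∑ ν, y μ * y ν * B μ ν ^ k) / k ! := by
        simp only [hFdef, ← Finset.sum_div, Fintype.sum_prod_type]
      rw [h1]
      have := hpow k y
      positivity
    have h01 : F 0 + F 1 ≤ ∑' k, F k := by
      have h := Summable.sum_le_tsum ({0, 1} : Finset ℕ) (fun k _ => hFnn k) hF
      rwa [Finset.sum_pair (by norm_num : (0:ℕ) ≠ 1)] at h
    have hF0 : F 0 = (∑ μ, y μ) ^ 2 := by
      simp only [hFdef, pow_zero, Nat.factorial_zero, Nat.cast_one, div_one, mul_one,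
        Fintype.sum_prod_type]
      rw [sq, Finset.sum_mul_sum]
    have hF1 : F 1 = ∑ μ, ∑ ν, y μ * y ν * B μ ν ^ 1 := by
      simp only [hFdef, Nat.factorial_one, Nat.cast_one, div_one, Fintype.sum_prod_type]
    have hpos : 0 < F 0 + F 1 := by
      by_cases hs : ∑ μ, y μ = 0
      · have h0 : F 0 = 0 := by rw [hF0, hs]; ring
        have h1 : 0 < F 1 := by
          rw [hF1]
          simpa [pow_one] using hBstrict y hy hs
        linarith
      · have h0 : 0 < F 0 := by rw [hF0]; positivity
        have h1 : 0 ≤ F 1 := by rw [hF1]; exact hpow 1 y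
        linarith
    linarith
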